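/- Let r and s be natural numbers, n = r + 2s, and let A be a real n×n matrix satisfying J_{r+s,s} · Aᵀ · J_{r+s,s} = A (i.e. A is self-adjoint with respect to the bilinear form of signature (r+s, s) given by J_{r+s,s}). Then the characteristic polynomial of A has at least r real roots counted with multiplicity. -/

import Mathlib

open Matrix Polynomial

section Aux

open Module Complex Finset

/-- Shift of the characteristic polynomial. -/
lemma aux_charpoly_sub_smul_one {N : ℕ} (B : Matrix (Fin N) (Fin N) ℂ) (μ : ℂ) :
    (B - μ • 1).charpoly = B.charpoly.comp (X + C μ) := by
  let ψ : ℂ[X] →+* ℂ[X] := (aeval (X + C μ) : ℂ[X] →ₐ[ℂ] ℂ[X]).toRingHom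
  have hψ : ∀ p : ℂ[X], ψ p = p.comp (X + C μ) := by
    intro p
    simp [ψ, aeval_def, eval₂_def, Polynomial.comp, Polynomial.algebraMap_eq]
  have h1 : (charmatrix B).map ψ = charmatrix (B - μ • 1) := by
    ext i j
    by_cases h : i = j
    · subst h
      simp [charmatrix_apply_eq, hψ, map_sub, Matrix.sub_apply, Matrix.smul_apply, one_apply_eq]
      ring
    · simp [charmatrix_apply_ne _ _ _ h, hψ, Matrix.sub_apply, Matrix.smul_apply, one_apply_ne h]
  calc (B - μ • 1).charpoly = (charmatrix (B - μ • 1)).det := rfl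
    _ = ((charmatrix B).map ψ).det := by rw [h1]
    _ = ψ (charmatrix B).det := (RingHom.map_det ψ _).symm
    _ = B.charpoly.comp (X + C μ) := hψ _

/-- The dimension of a generalized eigenspace equals the algebraic multiplicity. -/
lemma aux_finrank_eq_rootMultiplicity {N : ℕ} (B : Matrix (Fin N) (Fin N) ℂ) (μ : ℂ) :
    Module.finrank ℂ (Module.End.maxGenEigenspace (Matrix.toLin' B) μ) =
      B.charpoly.rootMultiplicity μ := by
  set f : Module.End ℂ (Fin N → ℂ) := Matrix.toLin' B
  have hφ : f - μ • 1 = Matrix.toLin' (B - μ • 1) := by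
    simp [f, map_sub, Matrix.toLin'_one]
    rfl
  have h1 : Module.End.maxGenEigenspace f μ = Module.End.maxGenEigenspace (f - μ • 1) 0 := by
    ext x
    simp [Module.End.mem_maxGenEigenspace]
  rw [h1, LinearMap.finrank_maxGenEigenspace_zero_eq]
  have h2 : (f - μ • 1).charpoly = (B - μ • 1).charpoly := by
    rw [hφ, ← LinearMap.charpoly_toMatrix (Matrix.toLin' (B - μ • 1)) (Pi.basisFun ℂ (Fin N))]
    congr 1
    rw [LinearMap.toMatrix_eq_toMatrix', LinearMap.toMatrix'_toLin']
  rw [h2, aux_charpoly_sub_smul_one, rootMultiplicity_eq_natTrailingDegree]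

/-- The indefinite hermitian form. -/
noncomputable def auxPhi {N : ℕ} (dc : Fin N → ℂ) (x y : Fin N → ℂ) : ℂ :=
  ∑ i, (starRingEnd ℂ) (x i) * dc i * y i

variable {N : ℕ} (dc : Fin N → ℂ) (Bc : Matrix (Fin N) (Fin N) ℂ)

lemma auxPhi_add_left (x x' y : Fin N → ℂ) :
    auxPhi dc (x + x') y = auxPhi dc x y + auxPhi dc x' y := by
  simp [auxPhi, mul_add, add_mul, Finset.sum_add_distrib]

lemma auxPhi_add_right (x y y' : Fin N → ℂ) :
    auxPhi dc x (y + y') = auxPhi dc x y + auxPhi dc x y' := by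
  simp [auxPhi, mul_add, Finset.sum_add_distrib]

lemma auxPhi_smul_left (a : ℂ) (x y : Fin N → ℂ) :
    auxPhi dc (a • x) y = (starRingEnd ℂ) a * auxPhi dc x y := by
  simp only [auxPhi, Finset.mul_sum, Pi.smul_apply, smul_eq_mul, _root_.map_mul]
  refine Finset.sum_congr rfl fun i _ => ?_
  ring

lemma auxPhi_smul_right (a : ℂ) (x y : Fin N → ℂ) :
    auxPhi dc x (a • y) = a * auxPhi dc x y := by
  simp only [auxPhi, Finset.mul_sum, Pi.smul_apply, smul_eq_mul]
  refine Finset.sum_congr rfl fun i _ => ?_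
  ring

lemma auxPhi_zero_left (y : Fin N → ℂ) : auxPhi dc 0 y = 0 := by simp [auxPhi]

lemma auxPhi_zero_right (x : Fin N → ℂ) : auxPhi dc x 0 = 0 := by simp [auxPhi]

lemma auxPhi_sub_left (x x' y : Fin N → ℂ) :
    auxPhi dc (x - x') y = auxPhi dc x y - auxPhi dc x' y := by
  simp [auxPhi, sub_mul, mul_sub, Finset.sum_sub_distrib]

lemma auxPhi_sub_right (x y y' : Fin N → ℂ) :
    auxPhi dc x (y - y') = auxPhi dc x y - auxPhi dc x y' := by
  simp [auxPhi, mul_sub, Finset.sum_sub_distrib]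

lemma auxPhi_selfadj (hreal : ∀ i j, (starRingEnd ℂ) (Bc i j) = Bc i j)
    (hkey : ∀ i j, Bc i j * dc i = dc j * Bc j i) (x y : Fin N → ℂ) :
    auxPhi dc (Matrix.toLin' Bc x) y = auxPhi dc x (Matrix.toLin' Bc y) := by
  simp only [auxPhi, Matrix.toLin'_apply, Matrix.mulVec, dotProduct, map_sum,
    _root_.map_mul, Finset.sum_mul, Finset.mul_sum, hreal]
  rw [Finset.sum_comm]
  refine Finset.sum_congr rfl fun j _ => Finset.sum_congr rfl fun i _ => ?_
  have := hkey i j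
  linear_combination ((starRingEnd ℂ) (x j) * y i) * this

lemma auxPhi_orth (hreal : ∀ i j, (starRingEnd ℂ) (Bc i j) = Bc i j)
    (hkey : ∀ i j, Bc i j * dc i = dc j * Bc j i) (μ ν : ℂ) (hμν : (starRingEnd ℂ) μ ≠ ν) :
    ∀ (n k l : ℕ), k + l ≤ n → ∀ x y : Fin N → ℂ,
      ((Matrix.toLin' Bc - μ • 1) ^ k) x = 0 → ((Matrix.toLin' Bc - ν • 1) ^ l) y = 0 →
      auxPhi dc x y = 0 := by
  set f : Module.End ℂ (Fin N → ℂ) := Matrix.toLin' Bc with hf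
  intro n
  induction n with
  | zero =>
    intro k l hkl x y hx hy
    have hk : k = 0 := by omega
    subst hk
    simp only [pow_zero, Module.End.one_apply] at hx
    subst hx; exact auxPhi_zero_left dc y
  | succ n ih =>
    intro k l hkl x y hx hy
    match k, l with
    | 0, l =>
      simp only [pow_zero, Module.End.one_apply] at hx
      subst hx; exact auxPhi_zero_left dc y
    | k + 1, 0 =>
      simp only [pow_zero, Module.End.one_apply] at hy
      subst hy; exact auxPhi_zero_right dc x
    | k + 1, l + 1 =>
      have hx' : ((f - μ • 1) ^ k) ((f - μ • 1) x) = 0 := by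
        rw [← Module.End.mul_apply, ← pow_succ]; exact hx
      have hy' : ((f - ν • 1) ^ l) ((f - ν • 1) y) = 0 := by
        rw [← Module.End.mul_apply, ← pow_succ]; exact hy
      have h1 : auxPhi dc ((f - μ • 1) x) y = 0 := ih k (l + 1) (by omega) _ _ hx' hy
      have h2 : auxPhi dc x ((f - ν • 1) y) = 0 := ih (k + 1) l (by omega) _ _ hx hy'
      have e1 : (f - μ • 1) x = f x - μ • x := by
        simp [LinearMap.sub_apply]
      have e2 : (f - ν • 1) y = f y - ν • y := by
        simp [LinearMap.sub_apply]
      rw [e1, auxPhi_sub_left, auxPhi_smul_left] at h1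
      rw [e2, auxPhi_sub_right, auxPhi_smul_right] at h2
      have hsym := auxPhi_selfadj dc Bc hreal hkey x y
      have : ((starRingEnd ℂ) μ - ν) * auxPhi dc x y = 0 := by
        rw [sub_mul]
        rw [sub_eq_zero] at h1 h2
        rw [← h1, ← h2, hsym]
        ring
      rcases mul_eq_zero.mp this with h | h
      · exact absurd (sub_eq_zero.mp h) hμν
      · exact h

lemma aux_finrank_le_of_neutral {N p q : ℕ} (hN : N = p + q) (W : Submodule ℂ (Fin N → ℂ))
    (hW : ∀ x ∈ W, auxPhi (fun i => if (i : ℕ) < p then (1 : ℂ) else -1) x x = 0) :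
    Module.finrank ℂ W ≤ q := by
  set dcc : Fin N → ℂ := fun i => if (i : ℕ) < p then (1 : ℂ) else -1 with hdc
  let g : Fin q → Fin N := fun j => ⟨p + j, by omega⟩
  let π : (Fin N → ℂ) →ₗ[ℂ] (Fin q → ℂ) := LinearMap.funLeft ℂ ℂ g
  have claim : ∀ x ∈ W, (∀ j, x (g j) = 0) → x = 0 := by
    intro x hx hxg
    have htail : ∀ i : Fin N, ¬((i : ℕ) < p) → x i = 0 := by
      intro i hi
      have : i = g ⟨(i : ℕ) - p, by omega⟩ := by
        apply Fin.ext; simp [g]; omega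
      rw [this]; exact hxg _
    have h0 := hW x hx
    have heq : auxPhi dcc x x =
        (((∑ i : Fin N, if (i : ℕ) < p then Complex.normSq (x i) else 0) : ℝ) : ℂ) := by
      rw [auxPhi]
      push_cast
      refine Finset.sum_congr rfl fun i _ => ?_
      by_cases h : (i : ℕ) < p
      · simp [hdc, h, Complex.normSq_eq_conj_mul_self]
      · simp [hdc, h, htail i h]
    rw [heq] at h0
    have hsum : (∑ i : Fin N, if (i : ℕ) < p then Complex.normSq (x i) else 0) = 0 := by
      exact_mod_cast h0
    have hz := (Finset.sum_eq_zero_iff_of_nonneg (fun i _ => by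
      by_cases h : (i : ℕ) < p
      · simp [h, Complex.normSq_nonneg]
      · simp [h])).mp hsum
    funext i
    by_cases h : (i : ℕ) < p
    · have := hz i (Finset.mem_univ i)
      rw [if_pos h] at this
      simpa using Complex.normSq_eq_zero.mp this
    · exact htail i h
  have hinj : Function.Injective (π.comp W.subtype) := by
    rw [← LinearMap.ker_eq_bot]
    rw [LinearMap.ker_eq_bot']
    rintro ⟨x, hx⟩ h
    apply Subtype.ext
    refine claim x hx fun j => ?_
    have hπ : π x = 0 := h
    have := congrFun hπ j
    simpa [π, LinearMap.funLeft_apply] using this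
  calc Module.finrank ℂ W ≤ Module.finrank ℂ (Fin q → ℂ) :=
        LinearMap.finrank_le_finrank_of_injective hinj
    _ = q := by simp

lemma aux_sum_finrank_eq {V : Type*} [AddCommGroup V] [Module ℂ V] [FiniteDimensional ℂ V]
    (f : Module.End ℂ V) (t : Finset ℂ) :
    ∑ μ ∈ t, Module.finrank ℂ (f.maxGenEigenspace μ) =
      Module.finrank ℂ ↥(t.sup f.maxGenEigenspace) := by
  induction t using Finset.induction_on with
  | empty => rw [Finset.sum_empty, Finset.sup_empty, finrank_bot]
  | insert a t ha ih =>
    rw [Finset.sum_insert ha, Finset.sup_insert, ih]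
    have hdisj : f.maxGenEigenspace a ⊓ t.sup f.maxGenEigenspace = ⊥ := by
      have h1 : t.sup f.maxGenEigenspace ≤ ⨆ ν, ⨆ (_ : ν ≠ a), f.maxGenEigenspace ν :=
        Finset.sup_le fun ν hν => by
          have hne : ν ≠ a := fun he => ha (he ▸ hν)
          exact le_iSup₂ (f := fun ν _ => f.maxGenEigenspace ν) ν hne
      exact ((f.independent_maxGenEigenspace a).mono_right h1).eq_bot
    have h2 := Submodule.finrank_sup_add_finrank_inf_eq (f.maxGenEigenspace a)
      (t.sup f.maxGenEigenspace)
    rw [hdisj] at h2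
    simp only [finrank_bot, add_zero] at h2
    omega

end Aux

theorem stmt_10 (r s : ℕ) (A : Matrix (Fin (r + 2 * s)) (Fin (r + 2 * s)) ℝ)
    (J : Matrix (Fin (r + 2 * s)) (Fin (r + 2 * s)) ℝ)
    (hJ : J = Matrix.diagonal fun i : Fin (r + 2 * s) => if (i : ℕ) < r + s then (1 : ℝ) else -1)
    (hA : J * Aᵀ * J = A) :
    r ≤ A.charpoly.roots.card := by
  classical
  set Bc : Matrix (Fin (r + 2 * s)) (Fin (r + 2 * s)) ℂ := A.map Complex.ofRealHom with hBc
  set dc : Fin (r + 2 * s) → ℂ := fun i => if (i : ℕ) < r + s then (1 : ℂ) else -1 with hdc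
  rw [hJ] at hA
  -- entrywise consequences of the self-adjointness hypothesis
  have hAe : ∀ i j : Fin (r + 2 * s),
      (if (i : ℕ) < r + s then (1 : ℝ) else -1) * A j i *
      (if (j : ℕ) < r + s then (1 : ℝ) else -1) = A i j := by
    intro i j
    have h := congrFun (congrFun hA i) j
    simp only [Matrix.mul_diagonal, Matrix.diagonal_mul, Matrix.transpose_apply] at h
    exact h
  have hkeyR : ∀ i j : Fin (r + 2 * s),
      A i j * (if (i : ℕ) < r + s then (1 : ℝ) else -1) =
      (if (j : ℕ) < r + s then (1 : ℝ) else -1) * A j i := by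
    intro i j
    have h := hAe j i
    by_cases hi : (i : ℕ) < r + s <;> by_cases hj : (j : ℕ) < r + s <;>
      simp [hi, hj] at h ⊢ <;> linarith
  have hreal : ∀ i j, (starRingEnd ℂ) (Bc i j) = Bc i j := by
    intro i j
    simp [hBc, Matrix.map_apply, Complex.conj_ofReal]
  have hkey : ∀ i j, Bc i j * dc i = dc j * Bc j i := by
    intro i j
    have h := hkeyR i j
    by_cases hi : (i : ℕ) < r + s <;> by_cases hj : (j : ℕ) < r + s <;>
      simp [hi, hj, hBc, hdc, Matrix.map_apply] at h ⊢ <;> exact_mod_cast h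
  set f : Module.End ℂ (Fin (r + 2 * s) → ℂ) := Matrix.toLin' Bc with hfdef
  set P : Polynomial ℂ := Bc.charpoly with hP
  have hPmap : P = A.charpoly.map Complex.ofRealHom := Matrix.charpoly_map A Complex.ofRealHom
  set T : Multiset ℂ := P.roots with hT
  -- the neutral subspace
  set W : Submodule ℂ (Fin (r + 2 * s) → ℂ) :=
    ⨆ μ : {μ : ℂ // 0 < μ.im}, Module.End.maxGenEigenspace f μ.val with hW
  have hneutral : ∀ x ∈ W, ∀ y ∈ W, auxPhi dc x y = 0 := by
    intro x hx
    refine Submodule.iSup_induction (motive := fun x => ∀ y ∈ W, auxPhi dc x y = 0) _ hx ?_ ?_ ?_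
    · rintro ⟨μ, hμ⟩ x hxμ y hy
      refine Submodule.iSup_induction (motive := fun y => auxPhi dc x y = 0) _ hy ?_ ?_ ?_
      · rintro ⟨ν, hν⟩ y hyν
        obtain ⟨k, hk⟩ := (Module.End.mem_maxGenEigenspace f μ x).mp hxμ
        obtain ⟨l, hl⟩ := (Module.End.mem_maxGenEigenspace f ν y).mp hyν
        have hne : (starRingEnd ℂ) μ ≠ ν := by
          intro he
          have h1 : ((starRingEnd ℂ) μ).im = ν.im := by rw [he]
          simp only [Complex.conj_im] at h1
          linarith
        exact auxPhi_orth dc Bc hreal hkey μ ν hne (k + l) k l le_rfl x y hk hl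
      · exact auxPhi_zero_right dc x
      · intro y₁ y₂ h1 h2
        rw [auxPhi_add_right, h1, h2, add_zero]
    · intro y hy
      exact auxPhi_zero_left dc y
    · intro x₁ x₂ h1 h2 y hy
      rw [auxPhi_add_left, h1 y hy, h2 y hy, add_zero]
  have hWdim : Module.finrank ℂ W ≤ s :=
    aux_finrank_le_of_neutral (by omega) W (fun x hx => hneutral x hx x hx)
  -- the count of roots in the upper half plane is at most s
  have h_upper : ((T.filter (fun z => 0 < z.im)).card : ℕ) ≤ s := by
    set t : Finset ℂ := (T.filter (fun z => 0 < z.im)).toFinset with ht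
    have him : ∀ z ∈ t, 0 < z.im := by
      intro z hz
      rw [ht, Multiset.mem_toFinset, Multiset.mem_filter] at hz
      exact hz.2
    have hcard : (T.filter (fun z => 0 < z.im)).card =
        ∑ z ∈ t, (T.filter (fun z => 0 < z.im)).count z :=
      (Multiset.toFinset_sum_count_eq _).symm
    have hcount : ∀ z ∈ t, (T.filter (fun z => 0 < z.im)).count z =
        Module.finrank ℂ (Module.End.maxGenEigenspace f z) := by
      intro z hz
      rw [Multiset.count_filter, if_pos (him z hz), hT, Polynomial.count_roots,
        ← aux_finrank_eq_rootMultiplicity]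
    rw [hcard, Finset.sum_congr rfl hcount, aux_sum_finrank_eq]
    have hle : t.sup (Module.End.maxGenEigenspace f) ≤ W := by
      refine Finset.sup_le fun z hz => ?_
      exact le_iSup (fun μ : {μ : ℂ // 0 < μ.im} =>
        Module.End.maxGenEigenspace f μ.val) ⟨z, him z hz⟩
    exact le_trans (Submodule.finrank_mono hle) hWdim
  -- conjugation symmetry
  have hPconj : P.map (starRingEnd ℂ) = P := by
    rw [hPmap, Polynomial.map_map]
    congr 1
    ext x
    simp [Complex.conj_ofReal]
  have h_conj_roots : T.map (starRingEnd ℂ) = T := by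
    have hs : P.Splits := IsAlgClosed.splits P
    have := hs.roots_map (starRingEnd ℂ)
    rw [hPconj] at this
    exact this.symm
  have h_count_conj : ∀ z, T.count ((starRingEnd ℂ) z) = T.count z := by
    intro z
    conv_lhs => rw [← h_conj_roots]
    exact Multiset.count_map_eq_count' _ _ (starRingEnd ℂ).injective z
  have h_neg : (T.filter (fun z => z.im < 0)).card =
      (T.filter (fun z => 0 < z.im)).card := by
    have heq : T.filter (fun z => z.im < 0) =
        (T.filter (fun z => 0 < z.im)).map (starRingEnd ℂ) := by
      refine Multiset.ext.mpr fun z => ?_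
      have e1 : ((T.filter (fun z => 0 < z.im)).map (starRingEnd ℂ)).count z =
          (T.filter (fun z => 0 < z.im)).count ((starRingEnd ℂ) z) := by
        conv_lhs => rw [show z = (starRingEnd ℂ) ((starRingEnd ℂ) z) from
          (Complex.conj_conj z).symm]
        exact Multiset.count_map_eq_count' _ _ (starRingEnd ℂ).injective _
      rw [e1, Multiset.count_filter, Multiset.count_filter]
      simp only [Complex.conj_im]
      by_cases h : z.im < 0
      · rw [if_pos h, if_pos (by linarith), h_count_conj]
      · rw [if_neg h, if_neg (by intro h'; exact h (by linarith))]
    rw [heq, Multiset.card_map]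
  -- split the roots
  have h_split : T.card = (T.filter (fun z => z.im = 0)).card +
      ((T.filter (fun z => 0 < z.im)).card + (T.filter (fun z => z.im < 0)).card) := by
    have e0 : T.filter (fun z => ¬ z.im = 0) =
        T.filter (fun z => 0 < z.im) + T.filter (fun z => z.im < 0) := by
      refine Multiset.ext.mpr fun z => ?_
      simp only [Multiset.count_add, Multiset.count_filter]
      rcases lt_trichotomy z.im 0 with h | h | h
      · rw [if_pos (by linarith), if_neg (by linarith), if_pos h, zero_add]
      · rw [if_neg (by simp [h]), if_neg (by linarith), if_neg (by linarith), add_zero]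
      · rw [if_pos (by linarith), if_pos h, if_neg (by linarith), add_zero]
    have hfan := Multiset.filter_add_not (fun z : ℂ => z.im = 0) T
    calc T.card = ((T.filter (fun z => z.im = 0)) + (T.filter (fun z => ¬ z.im = 0))).card := by
          rw [hfan]
      _ = (T.filter (fun z => z.im = 0)).card + (T.filter (fun z => ¬ z.im = 0)).card := by
          rw [Multiset.card_add]
      _ = _ := by rw [e0, Multiset.card_add]
  -- total number of roots
  have hTcard : T.card = r + 2 * s := by
    have hdeg : P.natDegree = r + 2 * s := by
      rw [hP, Matrix.charpoly_natDegree_eq_dim, Fintype.card_fin]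
    rw [hT, Polynomial.splits_iff_card_roots.mp (IsAlgClosed.splits P), hdeg]
  -- real roots count
  have h_real : A.charpoly.roots.card = (T.filter (fun z => z.im = 0)).card := by
    have heq : T.filter (fun z => z.im = 0) =
        A.charpoly.roots.map (Complex.ofRealHom : ℝ →+* ℂ) := by
      refine Multiset.ext.mpr fun z => ?_
      rw [Multiset.count_filter]
      by_cases h : z.im = 0
      · rw [if_pos h]
        have hz : z = Complex.ofRealHom z.re := by
          apply Complex.ext <;> simp [h]
        rw [hz]
        rw [Multiset.count_map_eq_count' _ _ Complex.ofRealHom.injective]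
        rw [hT, Polynomial.count_roots, Polynomial.count_roots, hPmap,
          ← Polynomial.eq_rootMultiplicity_map Complex.ofRealHom.injective]
      · rw [if_neg h]
        symm
        rw [Multiset.count_eq_zero]
        intro hz
        obtain ⟨a, _, rfl⟩ := Multiset.mem_map.mp hz
        simp at h
    rw [heq, Multiset.card_map]
  omega
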